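/- Fix an integer M ≥ 1 and real numbers r_min ≤ r_max. Let f₁ = 30x₂ − 30x₁, f₂ = 3Mx₁r − 3Mx₁x₃ − 3x₂ + 3x₁, f₃ = 3Mx₁x₂ − 8x₃ in ℝ[x₁,x₂,x₃,r]. Suppose there exist a polynomial V ∈ ℝ[x₁,x₂,x₃,r], tuples of polynomials a_e, a_o in ℝ[x₁,x₂,x₃] and b_e, b_o in ℝ[x₁,x₂,x₃,r], and real symmetric positive semidefinite matrices Q_e, Q_o, R_e, R_o of the appropriate sizes, such that the polynomial identity f₁·∂V/∂x₁ + f₂·∂V/∂x₂ + f₃·∂V/∂x₃ − (x₂ − x₁)² = M²(r − r_min)(r_max − r)·(a_eᵀQ_e a_e + a_oᵀQ_o a_o) + (b_eᵀR_e b_e + b_oᵀR_o b_o) holds in ℝ[x₁,x₂,x₃,r]. Then for every r ∈ [r_min, r_max], the rescaled Lorenz system with parameter r is globally stable: every global solution converges to the set of stationary points of its vector field. -/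

import Mathlib

open Filter Topology MvPolynomial

lemma hasDerivAt_mvpoly_eval {n : ℕ} (c : Fin n → ℝ → ℝ) (c' : Fin n → ℝ) (t : ℝ)
    (h : ∀ i, HasDerivAt (c i) (c' i) t) (p : MvPolynomial (Fin n) ℝ) :
    HasDerivAt (fun s => eval (fun i => c i s) p)
      (∑ i, c' i * eval (fun i => c i t) (pderiv i p)) t := by
  induction p using MvPolynomial.induction_on with
  | C a => simpa using hasDerivAt_const t a
  | add p q hp hq =>
      have := hp.fun_add hq
      simpa [Finset.sum_add_distrib, mul_add] using this
  | mul_X p i hp =>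
      have := hp.fun_mul (h i)
      simp only [eval_mul, eval_X] at this ⊢
      refine this.congr_deriv ?_
      symm
      have key : ∀ j, eval (fun i => c i t) (pderiv j (p * X i)) =
          eval (fun i => c i t) (pderiv j p) * c i t
            + (if j = i then eval (fun i => c i t) p else 0) := by
        intro j
        rw [pderiv_mul, pderiv_X]
        by_cases hji : j = i <;> simp [hji, Pi.single_apply, eq_comm]
      rw [Finset.sum_congr rfl fun j _ => by rw [key j, mul_add, mul_ite, mul_zero]]
      rw [Finset.sum_add_distrib]
      congr 1
      · rw [Finset.sum_mul]; exact Finset.sum_congr rfl fun j _ => by ring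
      · simp [Finset.sum_ite_eq', mul_comm]

lemma sos_eval_nonneg {m n : ℕ} (Q : Matrix (Fin m) (Fin m) ℝ) (hQ : Q.PosSemidef)
    (a : Fin m → MvPolynomial (Fin n) ℝ) (v : Fin n → ℝ) :
    0 ≤ eval v (∑ i, ∑ j, C (Q i j) * a i * a j) := by
  have h := hQ.dotProduct_mulVec_nonneg (fun i => eval v (a i))
  simp only [dotProduct, Matrix.mulVec, RCLike.star_def, starRingEnd_apply] at h
  calc (0:ℝ) ≤ _ := by exact_mod_cast h
    _ = eval v (∑ i, ∑ j, C (Q i j) * a i * a j) := by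
        simp [map_sum, dotProduct, Finset.mul_sum]
        exact Finset.sum_congr rfl fun i _ => Finset.sum_congr rfl fun j _ => by ring

lemma hasDerivAt_shift_exp {p d : ℝ → ℝ} (hp : ∀ t, HasDerivAt p (d t) t) (B k : ℝ) (s : ℝ) :
    HasDerivAt (fun u => (p u - B) * Real.exp (k * u))
      ((d s + k * (p s - B)) * Real.exp (k * s)) s := by
  have he : HasDerivAt (fun u : ℝ => Real.exp (k * u)) (Real.exp (k * s) * k) s := by
    simpa using ((hasDerivAt_id s).const_mul k).exp
  have := ((hp s).sub_const B).fun_mul he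
  refine this.congr_deriv ?_
  ring

lemma abs_sub_le_of_hasDerivAt {q q' : ℝ → ℝ} {L : ℝ}
    (h : ∀ t, HasDerivAt q (q' t) t) (hb : ∀ t, |q' t| ≤ L) (s t : ℝ) :
    |q s - q t| ≤ L * |s - t| := by
  have := Convex.norm_image_sub_le_of_norm_hasDerivWithin_le
    (f := q) (f' := q') (C := L) (s := Set.univ)
    (fun x _ => (h x).hasDerivWithinAt) (fun x _ => by simpa using hb x)
    convex_univ (Set.mem_univ t) (Set.mem_univ s)
  simpa [Real.norm_eq_abs] using this

/-- barrier comparison: if `U' + k U ≤ k B'` on `[T₀,∞)` then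
`U t - B' ≤ (U T₀ - B') * exp (k T₀ - k t)` for `t ≥ T₀`. -/
lemma barrier_upper {U d : ℝ → ℝ} {k B' T₀ : ℝ} (hk : 0 < k)
    (h : ∀ t, HasDerivAt U (d t) t) (hd : ∀ t, T₀ ≤ t → d t + k * U t ≤ k * B') :
    ∀ t, T₀ ≤ t → U t - B' ≤ (U T₀ - B') * Real.exp (k * T₀ - k * t) := by
  intro t ht
  have hUc : Continuous U := Differentiable.continuous (fun t => (h t).differentiableAt)
  have hc2 : Continuous fun u => (U u - B') * Real.exp (k * u) := by
    exact (hUc.sub continuous_const).mul (Real.continuous_exp.comp (continuous_const.mul continuous_id))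
  have hmono : AntitoneOn (fun u => (U u - B') * Real.exp (k * u)) (Set.Ici T₀) := by
    apply antitoneOn_of_deriv_nonpos (convex_Ici T₀) hc2.continuousOn
    · intro x _
      exact (hasDerivAt_shift_exp h B' k x).differentiableAt.differentiableWithinAt
    · intro x hx
      rw [(hasDerivAt_shift_exp h B' k x).deriv]
      have := hd x (le_of_lt (by simpa [interior_Ici] using hx))
      nlinarith [Real.exp_pos (k * x)]
  have hle := hmono Set.self_mem_Ici (Set.mem_Ici.mpr ht) ht
  simp only at hle
  have hexp : (0:ℝ) < Real.exp (k * t) := Real.exp_pos _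
  have h2 : Real.exp (k * T₀ - k * t) = Real.exp (k * T₀) / Real.exp (k * t) := by
    rw [Real.exp_sub]
  rw [h2, ← mul_div_assoc, le_div_iff₀ hexp, sub_mul]
  nlinarith [hle]

lemma gronwall_bound {U d : ℝ → ℝ} {k K : ℝ} (hk : 0 < k)
    (h : ∀ t, HasDerivAt U (d t) t) (hd : ∀ t, d t ≤ -k * U t + K) :
    ∀ t, 0 ≤ t → U t ≤ max (U 0) (K / k) := by
  intro t ht
  set B := max (U 0) (K / k) with hB
  have hKB : K ≤ k * B := by
    have : K / k ≤ B := le_max_right _ _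
    calc K = k * (K / k) := by field_simp
      _ ≤ k * B := mul_le_mul_of_nonneg_left this hk.le
  have hbar := barrier_upper (B' := B) (T₀ := 0) hk h (fun s _ => by linarith [hd s]) t ht
  have hU0 : U 0 - B ≤ 0 := by have : U 0 ≤ B := le_max_left _ _; linarith
  have : (U 0 - B) * Real.exp (k * 0 - k * t) ≤ 0 :=
    mul_nonpos_of_nonpos_of_nonneg hU0 (Real.exp_pos _).le
  linarith

/-- Exponential decay with vanishing forcing. -/
lemma tendsto_zero_of_decay {p c : ℝ → ℝ} {k : ℝ} (hk : 0 < k)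
    (h : ∀ t, HasDerivAt p (-k * p t + c t) t) (hc : Tendsto c atTop (𝓝 0)) :
    Tendsto p atTop (𝓝 0) := by
  rw [Metric.tendsto_atTop]
  intro ε hε
  obtain ⟨T₀, hT₀⟩ := (Metric.tendsto_atTop.mp hc) (k * ε / 4) (by positivity)
  have hcb : ∀ t, T₀ ≤ t → |c t| ≤ k * ε / 4 := fun t ht => by
    have := hT₀ t ht; rw [Real.dist_eq, sub_zero] at this; linarith [le_of_lt this]
  have upper := barrier_upper (B' := ε/4) (T₀ := T₀) hk h
    (fun s hs => by have := (abs_le.mp (hcb s hs)).2; nlinarith)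
  have lower : ∀ t, T₀ ≤ t →
      -(ε/4) - (-(p T₀) - ε/4) * Real.exp (k * T₀ - k * t) ≤ p t := by
    have := barrier_upper (U := fun u => -(p u)) (d := fun u => -(-k * p u + c u))
      (B' := ε/4) (T₀ := T₀) hk (fun s => (h s).neg)
      (fun s hs => by have := (abs_le.mp (hcb s hs)).1; nlinarith)
    intro t ht
    have := this t ht
    linarith
  -- the exponential term tends to 0
  have hexp0 : Tendsto (fun t => Real.exp (k * T₀ - k * t)) atTop (𝓝 0) := by
    apply Real.tendsto_exp_atBot.comp
    rw [tendsto_atTop_atBot]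
    intro b
    refine ⟨(k * T₀ - b) / k, fun a ha => ?_⟩
    have := (div_le_iff₀ hk).mp ha
    nlinarith
  obtain ⟨T₁, hT₁⟩ := (Metric.tendsto_atTop.mp hexp0) (ε / (4 * (|p T₀| + ε/4 + 1))) (by positivity)
  refine ⟨max T₀ T₁, fun t ht => ?_⟩
  have ht0 : T₀ ≤ t := le_trans (le_max_left _ _) ht
  have ht1 : T₁ ≤ t := le_trans (le_max_right _ _) ht
  have he := hT₁ t ht1
  rw [Real.dist_eq, sub_zero, abs_of_pos (Real.exp_pos _)] at he
  have hebound : (|p T₀| + ε/4 + 1) * Real.exp (k * T₀ - k * t) ≤ ε / 4 := by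
    have hpos : (0:ℝ) < |p T₀| + ε/4 + 1 := by positivity
    have := mul_le_mul_of_nonneg_left he.le hpos.le
    calc (|p T₀| + ε/4 + 1) * Real.exp (k * T₀ - k * t)
        ≤ (|p T₀| + ε/4 + 1) * (ε / (4 * (|p T₀| + ε/4 + 1))) := this
      _ = ε / 4 := by field_simp
  rw [Real.dist_eq, sub_zero, abs_lt]
  have hU := upper t ht0
  have hL := lower t ht0
  have habs := abs_nonneg (p T₀)
  have h1 : |p T₀| - ε/4 ≤ |p T₀| + ε/4 + 1 := by linarith
  have hexppos := Real.exp_pos (k * T₀ - k * t)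
  constructor
  · -- -ε < p t
    have : (-(p T₀) - ε/4) * Real.exp (k * T₀ - k * t) ≤ ε/4 := by
      have h2 : -(p T₀) - ε/4 ≤ |p T₀| + ε/4 + 1 := by
        have := neg_abs_le (p T₀); linarith
      nlinarith
    linarith
  · have : (p T₀ - ε/4) * Real.exp (k * T₀ - k * t) ≤ ε/4 := by
      have h2 : p T₀ - ε/4 ≤ |p T₀| + ε/4 + 1 := by
        have := le_abs_self (p T₀); linarith
      nlinarith
    linarith
lemma continuous_mvpoly_eval {n : ℕ} {E : Type*} [TopologicalSpace E]
    (c : Fin n → E → ℝ) (hc : ∀ i, Continuous (c i)) (p : MvPolynomial (Fin n) ℝ) :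
    Continuous fun z => eval (fun i => c i z) p := by
  induction p using MvPolynomial.induction_on with
  | C a => simpa using continuous_const
  | add p q hp hq => simpa using hp.fun_add hq
  | mul_X p i hp => simpa using hp.fun_mul (hc i)

lemma bound_on_box {Φ : ℝ × ℝ × ℝ → ℝ} (hΦ : Continuous Φ) (R : ℝ) :
    ∃ C, ∀ a b c : ℝ, |a| ≤ R → |b| ≤ R → |c| ≤ R → |Φ (a, b, c)| ≤ C := by
  have hK : IsCompact ((Set.Icc (-R) R) ×ˢ ((Set.Icc (-R) R) ×ˢ (Set.Icc (-R) R))) :=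
    (isCompact_Icc).prod ((isCompact_Icc).prod isCompact_Icc)
  obtain ⟨C, hC⟩ := hK.exists_bound_of_continuousOn hΦ.continuousOn
  refine ⟨C, fun a b c ha hb hc => ?_⟩
  have := hC (a, b, c) ⟨⟨(abs_le.mp ha).1, (abs_le.mp ha).2⟩,
    ⟨(abs_le.mp hb).1, (abs_le.mp hb).2⟩, ⟨(abs_le.mp hc).1, (abs_le.mp hc).2⟩⟩
  simpa [Real.norm_eq_abs] using this
lemma abs_sub_le_of_hasDerivAt' {q q' : ℝ → ℝ} {L a : ℝ}
    (h : ∀ t, HasDerivAt q (q' t) t) (hb : ∀ t, a ≤ t → |q' t| ≤ L)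
    {s t : ℝ} (hs : a ≤ s) (ht : a ≤ t) :
    |q s - q t| ≤ L * |s - t| := by
  have := Convex.norm_image_sub_le_of_norm_hasDerivWithin_le
    (f := q) (f' := q') (C := L) (s := Set.Ici a)
    (fun x hx => (h x).hasDerivWithinAt) (fun x hx => by simpa using hb x hx)
    (convex_Ici a) ht hs
  simpa [Real.norm_eq_abs] using this

/-- If `w' = q + e` where `q` has bounded derivative (for `t ≥ 0`), `e → 0`,
and `w` stays close to a slowly-varying function `z` (`z' → 0`), then `q → 0`. -/
lemma drift_tendsto_zero {q q' w z z' e : ℝ → ℝ} {L : ℝ}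
    (hq : ∀ t, HasDerivAt q (q' t) t) (hq'b : ∀ t, 0 ≤ t → |q' t| ≤ L)
    (hw : ∀ t, HasDerivAt w (q t + e t) t)
    (hz : ∀ t, HasDerivAt z (z' t) t)
    (hec : Continuous e) (hz'c : Continuous z')
    (hwz : Tendsto (fun t => w t - z t) atTop (𝓝 0))
    (hz'0 : Tendsto z' atTop (𝓝 0)) (he0 : Tendsto e atTop (𝓝 0)) :
    Tendsto q atTop (𝓝 0) := by
  have hqc : Continuous q := Differentiable.continuous (fun t => (hq t).differentiableAt)
  by_contra hcon
  -- extract ε with frequently |q t| ≥ ε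
  have hfreq : ∃ ε > 0, ∀ N : ℝ, ∃ t, N ≤ t ∧ ε ≤ |q t| := by
    rw [Metric.tendsto_atTop] at hcon
    push_neg at hcon
    obtain ⟨ε, hε, hcon⟩ := hcon
    refine ⟨ε, hε, fun N => ?_⟩
    obtain ⟨t, ht, h2⟩ := hcon N
    exact ⟨t, ht, by rwa [Real.dist_eq, sub_zero] at h2⟩
  obtain ⟨ε, hε, hfr⟩ := hfreq
  set L1 := max L 0 + 1 with hL1def
  have hL1 : 0 < L1 := by positivity
  have hq'b1 : ∀ t, 0 ≤ t → |q' t| ≤ L1 := fun t ht =>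
    le_trans (hq'b t ht) (by rw [hL1def]; linarith [le_max_left L 0])
  set T := ε / (2 * L1) with hTdef
  have hT : 0 < T := by positivity
  set δ := ε * T / (8 * (1 + T)) with hδdef
  have hδ : 0 < δ := by positivity
  -- eventual smallness
  obtain ⟨N1, hN1⟩ := Metric.tendsto_atTop.mp hwz δ hδ
  obtain ⟨N2, hN2⟩ := Metric.tendsto_atTop.mp hz'0 δ hδ
  obtain ⟨N3, hN3⟩ := Metric.tendsto_atTop.mp he0 δ hδ
  set N := max (max N1 N2) (max N3 0) with hNdef
  obtain ⟨t₀, ht₀N, ht₀q⟩ := hfr N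
  have ht₀0 : 0 ≤ t₀ := le_trans (le_trans (le_max_right N3 0) (le_max_right _ _)) ht₀N
  have hwzb : ∀ t, N ≤ t → |w t - z t| ≤ δ := fun t ht => by
    have := hN1 t (le_trans (le_trans (le_max_left N1 N2) (le_max_left _ _)) ht)
    rw [Real.dist_eq, sub_zero] at this; exact this.le
  have hz'b : ∀ t, N ≤ t → |z' t| ≤ δ := fun t ht => by
    have := hN2 t (le_trans (le_trans (le_max_right N1 N2) (le_max_left _ _)) ht)
    rw [Real.dist_eq, sub_zero] at this; exact this.le
  have heb : ∀ t, N ≤ t → |e t| ≤ δ := fun t ht => by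
    have := hN3 t (le_trans (le_trans (le_max_left N3 0) (le_max_right _ _)) ht)
    rw [Real.dist_eq, sub_zero] at this; exact this.le
  -- Lipschitz estimate on the window
  have hqwin : ∀ s ∈ Set.uIoc t₀ (t₀ + T), ‖q s - q t₀‖ ≤ ε / 2 := by
    intro s hs
    rw [Set.uIoc_of_le (by linarith)] at hs
    have hs0 : 0 ≤ s := le_trans ht₀0 hs.1.le
    have := abs_sub_le_of_hasDerivAt' hq hq'b1 hs0 ht₀0
    have h1 : |s - t₀| ≤ T := by
      rw [abs_of_nonneg (by linarith [hs.1.le])]; linarith [hs.2]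
    have h2 : L1 * |s - t₀| ≤ L1 * T := mul_le_mul_of_nonneg_left h1 hL1.le
    have h3 : L1 * T = ε / 2 := by rw [hTdef]; field_simp
    rw [Real.norm_eq_abs]
    linarith [h3 ▸ (le_trans this h2)]
  -- integral estimates
  have hIntq : IntervalIntegrable q MeasureTheory.volume t₀ (t₀ + T) :=
    hqc.intervalIntegrable _ _
  have hI1 : ε / 2 * T ≤ |∫ s in t₀..(t₀ + T), q s| := by
    have hsub : (∫ s in t₀..(t₀ + T), q s) - T * q t₀
        = ∫ s in t₀..(t₀ + T), (q s - q t₀) := by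
      rw [intervalIntegral.integral_sub hIntq intervalIntegrable_const,
        intervalIntegral.integral_const]
      simp only [smul_eq_mul]
      ring
    have hbnd : ‖∫ s in t₀..(t₀ + T), (q s - q t₀)‖ ≤ ε / 2 * |t₀ + T - t₀| :=
      intervalIntegral.norm_integral_le_of_norm_le_const hqwin
    rw [Real.norm_eq_abs] at hbnd
    have h4 : |t₀ + T - t₀| = T := by rw [abs_of_nonneg (by linarith)]; ring_nf
    rw [h4, ← hsub] at hbnd
    have h5 : ε * T ≤ |T * q t₀| := by
      rw [abs_mul, abs_of_nonneg hT.le]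
      calc ε * T = T * ε := by ring
        _ ≤ T * |q t₀| := mul_le_mul_of_nonneg_left ht₀q hT.le
    have := abs_sub_abs_le_abs_sub (T * q t₀) (T * q t₀ - (∫ s in t₀..(t₀ + T), q s))
    have habs : |T * q t₀ - (∫ s in t₀..(t₀ + T), q s)| = |(∫ s in t₀..(t₀ + T), q s) - T * q t₀| := abs_sub_comm _ _
    simp only [sub_sub_cancel] at this
    rw [habs] at this
    linarith
  -- FTC for w and z
  have hFTCw : (∫ s in t₀..(t₀ + T), (q s + e s)) = w (t₀ + T) - w t₀ :=
    intervalIntegral.integral_eq_sub_of_hasDerivAt (fun s _ => hw s)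
      ((hqc.add hec).intervalIntegrable _ _)
  have hFTCz : (∫ s in t₀..(t₀ + T), z' s) = z (t₀ + T) - z t₀ :=
    intervalIntegral.integral_eq_sub_of_hasDerivAt (fun s _ => hz s)
      (hz'c.intervalIntegrable _ _)
  have hwinmem : ∀ s ∈ Set.uIoc t₀ (t₀ + T), N ≤ s := by
    intro s hs
    rw [Set.uIoc_of_le (by linarith)] at hs
    linarith [hs.1, ht₀N]
  have hIe : |∫ s in t₀..(t₀ + T), e s| ≤ δ * T := by
    have := intervalIntegral.norm_integral_le_of_norm_le_const
      (C := δ) (f := e) (a := t₀) (b := t₀ + T)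
      (fun s hs => by rw [Real.norm_eq_abs]; exact heb s (hwinmem s hs))
    rw [Real.norm_eq_abs] at this
    have h4 : |t₀ + T - t₀| = T := by rw [abs_of_nonneg (by linarith)]; ring_nf
    rw [h4] at this; exact this
  have hIz : |z (t₀ + T) - z t₀| ≤ δ * T := by
    rw [← hFTCz]
    have := intervalIntegral.norm_integral_le_of_norm_le_const
      (C := δ) (f := z') (a := t₀) (b := t₀ + T)
      (fun s hs => by rw [Real.norm_eq_abs]; exact hz'b s (hwinmem s hs))
    rw [Real.norm_eq_abs] at this
    have h4 : |t₀ + T - t₀| = T := by rw [abs_of_nonneg (by linarith)]; ring_nf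
    rw [h4] at this; exact this
  -- combine
  have hsplit : (∫ s in t₀..(t₀ + T), q s)
      = (w (t₀ + T) - w t₀) - ∫ s in t₀..(t₀ + T), e s := by
    rw [← hFTCw, intervalIntegral.integral_add hIntq (hec.intervalIntegrable _ _)]
    ring
  have hw1 : |w (t₀ + T) - w t₀| ≤ 2 * δ + δ * T := by
    have h1 := hwzb (t₀ + T) (by linarith [ht₀N])
    have h2 := hwzb t₀ ht₀N
    have key : w (t₀ + T) - w t₀
        = ((w (t₀+T) - z (t₀+T)) - (w t₀ - z t₀)) + (z (t₀+T) - z t₀) := by ring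
    rw [key]
    calc |_| ≤ |(w (t₀+T) - z (t₀+T)) - (w t₀ - z t₀)| + |z (t₀+T) - z t₀| := abs_add_le _ _
      _ ≤ (|w (t₀+T) - z (t₀+T)| + |w t₀ - z t₀|) + (δ * T) := by
          gcongr
          exact abs_sub _ _
      _ ≤ 2 * δ + δ * T := by linarith
  have hItot : |∫ s in t₀..(t₀ + T), q s| ≤ 2 * δ + 2 * (δ * T) := by
    rw [hsplit]
    calc |_| ≤ |w (t₀ + T) - w t₀| + |∫ s in t₀..(t₀ + T), e s| := abs_sub _ _
      _ ≤ (2 * δ + δ * T) + δ * T := by linarith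
      _ = 2 * δ + 2 * (δ * T) := by ring
  -- numeric contradiction
  have hnum : 2 * δ + 2 * (δ * T) = ε * T / 4 := by
    rw [hδdef]; field_simp; ring
  rw [hnum] at hItot
  nlinarith [hI1, hItot, mul_pos hε hT]

/-- Barbalat: nonnegative, Lipschitz, with bounded primitive ⇒ tends to zero. -/
lemma barbalat {g g' : ℝ → ℝ} {L B : ℝ}
    (hg : ∀ t, HasDerivAt g (g' t) t) (hgpos : ∀ t, 0 ≤ g t)
    (hL : ∀ t, 0 ≤ t → |g' t| ≤ L)
    (hint : ∀ T, 0 ≤ T → (∫ t in (0:ℝ)..T, g t) ≤ B) :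
    Tendsto g atTop (𝓝 0) := by
  have hcont : Continuous g := Differentiable.continuous (fun t => (hg t).differentiableAt)
  set F : ℝ → ℝ := fun T => ∫ t in (0:ℝ)..T, g t with hF
  have hIntble : ∀ a b : ℝ, IntervalIntegrable g MeasureTheory.volume a b :=
    fun a b => hcont.intervalIntegrable a b
  have hFadd : ∀ a b : ℝ, F b - F a = ∫ t in a..b, g t := by
    intro a b
    have := intervalIntegral.integral_add_adjacent_intervals (hIntble 0 a) (hIntble a b)
    simp only [hF]
    linarith [this]
  have hmono : Monotone F := by
    intro a b hab
    have h1 : 0 ≤ ∫ t in a..b, g t :=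
      intervalIntegral.integral_nonneg hab (fun u _ => hgpos u)
    have := hFadd a b
    linarith
  have hbdd : ∀ T, F T ≤ B := by
    intro T
    calc F T ≤ F (max T 0) := hmono (le_max_left _ _)
      _ ≤ B := hint _ (le_max_right _ _)
  have hlim : ∃ ℓ, Tendsto F atTop (𝓝 ℓ) := by
    refine ⟨⨆ T, F T, tendsto_atTop_ciSup hmono ⟨B, ?_⟩⟩
    rintro x ⟨T, rfl⟩; exact hbdd T
  obtain ⟨ℓ, hℓ⟩ := hlim
  -- now prove g → 0
  by_contra hcon
  -- ∃ ε > 0, frequently g t ≥ ε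
  have hfreq : ∃ ε > 0, ∃ᶠ t in atTop, ε ≤ g t := by
    by_contra hno
    push_neg at hno
    apply hcon
    rw [Metric.tendsto_atTop]
    intro ε hε
    have := hno (ε/2) (by linarith)
    rw [Filter.eventually_atTop] at this
    obtain ⟨T, hT⟩ := this
    refine ⟨T, fun t ht => ?_⟩
    have := hT t ht
    rw [Real.dist_eq, sub_zero, abs_of_nonneg (hgpos t)]
    linarith
  obtain ⟨ε, hε, hfr⟩ := hfreq
  set L1 := L + 1 with hL1
  have hL1pos : 0 < L1 := by have := hL 0 le_rfl; have := abs_nonneg (g' 0); linarith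
  set h := ε / (2 * L1) with hh
  have hhpos : 0 < h := by positivity
  -- window estimate
  have hwin : ∀ t₀, 0 ≤ t₀ → ε ≤ g t₀ → ε / 2 * h ≤ F (t₀ + h) - F t₀ := by
    intro t₀ ht₀0 ht₀
    rw [hFadd]
    have hgbound : ∀ s ∈ Set.Icc t₀ (t₀ + h), ε / 2 ≤ g s := by
      intro s hs
      have hlip := abs_sub_le_of_hasDerivAt' (L := L1) (a := 0) hg
        (fun t ht => le_trans (hL t ht) (by rw [hL1]; linarith))
        (le_trans ht₀0 hs.1) ht₀0
      have h1 : |s - t₀| ≤ h := by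
        rw [abs_of_nonneg (by linarith [hs.1])]
        linarith [hs.2]
      have h2 : |g s - g t₀| ≤ L1 * h := le_trans hlip (by nlinarith [abs_nonneg (s - t₀)])
      have h3 : L1 * h = ε / 2 := by rw [hh]; field_simp
      have h4 : |g s - g t₀| ≤ ε / 2 := by rw [← h3]; exact h2
      have := (abs_le.mp h4).1
      linarith
    calc ε / 2 * h = ∫ _ in t₀..(t₀ + h), (ε/2 : ℝ) := by
          rw [intervalIntegral.integral_const]; simp; ring
      _ ≤ ∫ s in t₀..(t₀ + h), g s := by
          apply intervalIntegral.integral_mono_on (by linarith)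
            (intervalIntegrable_const) (hIntble _ _)
          exact fun s hs => hgbound s hs
  -- contradiction with Cauchy property of F
  have hc : Tendsto (fun t => F (t + h) - F t) atTop (𝓝 0) := by
    have h1 : Tendsto (fun t => F (t + h)) atTop (𝓝 ℓ) :=
      hℓ.comp (tendsto_atTop_add_const_right _ h tendsto_id)
    simpa using h1.sub hℓ
  have hev : ∀ᶠ t in atTop, F (t + h) - F t < ε / 2 * h := by
    have : Set.Iio (ε/2*h) ∈ 𝓝 (0:ℝ) := Iio_mem_nhds (by positivity)
    exact hc.eventually this
  obtain ⟨t₀, ht₀1, ht₀2, ht₀3⟩ := (hfr.and_eventually (hev.and (eventually_ge_atTop 0))).exists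
  exact absurd (hwin t₀ ht₀3 ht₀1) (by linarith)
set_option maxHeartbeats 2000000 in
/-- Block-diagonal sum-of-squares certificate: variables are `X 0 = x₁`,
`X 1 = x₂`, `X 2 = x₃`, `X 3 = r`. If the Gram-matrix polynomial identity holds with
positive semidefinite matrices `Q_e, Q_o, R_e, R_o`, then for every `r ∈ [r_min, r_max]`
the rescaled Lorenz system with parameter `r` is globally stable. -/
theorem rescaled_lorenz_globally_stable_of_sos
    (M : ℤ) (hM : 1 ≤ M) (rmin rmax : ℝ) (hr : rmin ≤ rmax)
    (me mo ne' no : ℕ)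
    (V : MvPolynomial (Fin 4) ℝ)
    (ae : Fin me → MvPolynomial (Fin 3) ℝ) (ao : Fin mo → MvPolynomial (Fin 3) ℝ)
    (be : Fin ne' → MvPolynomial (Fin 4) ℝ) (bo : Fin no → MvPolynomial (Fin 4) ℝ)
    (Qe : Matrix (Fin me) (Fin me) ℝ) (Qo : Matrix (Fin mo) (Fin mo) ℝ)
    (Re : Matrix (Fin ne') (Fin ne') ℝ) (Ro : Matrix (Fin no) (Fin no) ℝ)
    (hQe : Qe.PosSemidef) (hQo : Qo.PosSemidef) (hRe : Re.PosSemidef) (hRo : Ro.PosSemidef)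
    (hmain :
      (30 * X 1 - 30 * X 0) * pderiv 0 V
        + (C (3 * (M : ℝ)) * X 0 * X 3 - C (3 * (M : ℝ)) * X 0 * X 2 - 3 * X 1 + 3 * X 0)
            * pderiv 1 V
        + (C (3 * (M : ℝ)) * X 0 * X 1 - 8 * X 2) * pderiv 2 V
        - (X 1 - X 0) ^ 2
      = C ((M : ℝ) ^ 2) * (X 3 - C rmin) * (C rmax - X 3)
          * (rename Fin.castSucc (∑ i, ∑ j, C (Qe i j) * ae i * ae j)
              + rename Fin.castSucc (∑ i, ∑ j, C (Qo i j) * ao i * ao j))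
        + ((∑ i, ∑ j, C (Re i j) * be i * be j) + ∑ i, ∑ j, C (Ro i j) * bo i * bo j)) :
    ∀ r : ℝ, rmin ≤ r → r ≤ rmax →
      ∀ y : ℝ → EuclideanSpace ℝ (Fin 3),
        (∀ t : ℝ,
          HasDerivAt (fun u => y u 0) (30 * y t 1 - 30 * y t 0) t ∧
          HasDerivAt (fun u => y u 1)
            (3 * (M : ℝ) * y t 0 * r - 3 * (M : ℝ) * y t 0 * y t 2 - 3 * y t 1 + 3 * y t 0) t ∧
          HasDerivAt (fun u => y u 2) (3 * (M : ℝ) * y t 0 * y t 1 - 8 * y t 2) t) →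
        Tendsto (fun t => Metric.infDist (y t)
            {z : EuclideanSpace ℝ (Fin 3) |
              30 * z 1 - 30 * z 0 = 0 ∧
              3 * (M : ℝ) * z 0 * r - 3 * (M : ℝ) * z 0 * z 2 - 3 * z 1 + 3 * z 0 = 0 ∧
              3 * (M : ℝ) * z 0 * z 1 - 8 * z 2 = 0})
          atTop (𝓝 0) := by
  intro r hrmin hrmax y hy
  have hMr : (1:ℝ) ≤ (M:ℝ) := by exact_mod_cast hM
  have hy0 : ∀ t : ℝ, HasDerivAt (fun u => y u 0) (30 * y t 1 - 30 * y t 0) t :=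
    fun t => (hy t).1
  have hy1 : ∀ t : ℝ, HasDerivAt (fun u => y u 1)
      (3 * (M : ℝ) * y t 0 * r - 3 * (M : ℝ) * y t 0 * y t 2 - 3 * y t 1 + 3 * y t 0) t :=
    fun t => (hy t).2.1
  have hy2 : ∀ t : ℝ, HasDerivAt (fun u => y u 2)
      (3 * (M : ℝ) * y t 0 * y t 1 - 8 * y t 2) t := fun t => (hy t).2.2
  have hc0 : Continuous fun t => y t 0 :=
    Differentiable.continuous fun t => (hy0 t).differentiableAt
  have hc1 : Continuous fun t => y t 1 :=
    Differentiable.continuous fun t => (hy1 t).differentiableAt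
  have hc2 : Continuous fun t => y t 2 :=
    Differentiable.continuous fun t => (hy2 t).differentiableAt
  -- STEP A: boundedness of the trajectory for t ≥ 0
  set cst : ℝ := (M:ℝ) * r + 11 with hcst
  set U : ℝ → ℝ := fun t =>
    ((M:ℝ) * y t 0)^2 + ((M:ℝ) * y t 1)^2 + ((M:ℝ) * y t 2 - cst)^2 with hUdef
  set DU : ℝ → ℝ := fun t =>
    2 * ((M:ℝ) * y t 0) * ((M:ℝ) * (30 * y t 1 - 30 * y t 0))
    + 2 * ((M:ℝ) * y t 1) * ((M:ℝ) *
        (3 * (M : ℝ) * y t 0 * r - 3 * (M : ℝ) * y t 0 * y t 2 - 3 * y t 1 + 3 * y t 0))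
    + 2 * ((M:ℝ) * y t 2 - cst) * ((M:ℝ) * (3 * (M : ℝ) * y t 0 * y t 1 - 8 * y t 2)) with hDUdef
  have hU : ∀ t, HasDerivAt U (DU t) t := by
    intro t
    have h1 := (((hy0 t).const_mul ((M:ℝ))).fun_pow 2)
    have h2 := (((hy1 t).const_mul ((M:ℝ))).fun_pow 2)
    have h3 := ((((hy2 t).const_mul ((M:ℝ))).sub_const cst).fun_pow 2)
    have := (h1.fun_add h2).fun_add h3
    refine this.congr_deriv ?_
    ring
  have hDU : ∀ t, DU t ≤ -6 * U t + 8 * cst^2 := by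
    intro t
    simp only [hDUdef, hUdef, hcst]
    nlinarith [sq_nonneg ((M:ℝ) * y t 0), sq_nonneg ((M:ℝ) * y t 1),
      sq_nonneg (5 * ((M:ℝ) * y t 2) - ((M:ℝ) * r + 11)),
      sq_nonneg ((M:ℝ) * r + 11)]
  have hUB := gronwall_bound (k := 6) (K := 8 * cst^2) (by norm_num) hU hDU
  set B : ℝ := max (U 0) (8 * cst ^ 2 / 6) with hBdef
  have hB0 : 0 ≤ B := le_trans (by positivity : (0:ℝ) ≤ U 0) (le_max_left _ _)
  set R : ℝ := Real.sqrt (2 * B + 2 * cst^2) with hRdef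
  have hR0 : 0 ≤ R := Real.sqrt_nonneg _
  have hsq : ∀ t, 0 ≤ t →
      (y t 0)^2 ≤ 2 * B + 2 * cst^2 ∧ (y t 1)^2 ≤ 2 * B + 2 * cst^2 ∧
      (y t 2)^2 ≤ 2 * B + 2 * cst^2 := by
    intro t ht
    have hUt := hUB t ht
    simp only [hUdef] at hUt
    have h1 : ((M:ℝ) * y t 0)^2 + ((M:ℝ) * y t 1)^2 + ((M:ℝ) * y t 2 - cst)^2 ≤ B := hUt
    refine ⟨?_, ?_, ?_⟩
    · nlinarith [sq_nonneg (y t 0), sq_nonneg ((M:ℝ) * y t 1),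
        sq_nonneg ((M:ℝ) * y t 2 - cst), sq_nonneg cst, sq_nonneg ((M:ℝ) - 1),
        sq_nonneg (((M:ℝ) - 1) * y t 0)]
    · nlinarith [sq_nonneg (y t 1), sq_nonneg ((M:ℝ) * y t 0),
        sq_nonneg ((M:ℝ) * y t 2 - cst), sq_nonneg cst,
        sq_nonneg (((M:ℝ) - 1) * y t 1)]
    · nlinarith [sq_nonneg ((M:ℝ) * y t 0), sq_nonneg ((M:ℝ) * y t 1),
        sq_nonneg ((M:ℝ) * y t 2 - 2 * cst), sq_nonneg (((M:ℝ) - 1) * y t 2)]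
  have habs : ∀ (a : ℝ), a^2 ≤ 2 * B + 2 * cst^2 → |a| ≤ R := by
    intro a ha
    rw [hRdef, ← Real.sqrt_sq_eq_abs]
    exact Real.sqrt_le_sqrt ha
  have hR : ∀ t, 0 ≤ t → |y t 0| ≤ R ∧ |y t 1| ≤ R ∧ |y t 2| ≤ R := by
    intro t ht
    obtain ⟨h1, h2, h3⟩ := hsq t ht
    exact ⟨habs _ h1, habs _ h2, habs _ h3⟩
  -- STEP B: the auxiliary function W and its derivative
  set v : ℝ → Fin 4 → ℝ := fun t => ![y t 0, y t 1, y t 2, r] with hvdef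
  have hv0 : ∀ t, v t 0 = y t 0 := fun t => rfl
  have hv1 : ∀ t, v t 1 = y t 1 := fun t => rfl
  have hv2 : ∀ t, v t 2 = y t 2 := fun t => rfl
  have hv3 : ∀ t, v t 3 = r := fun t => rfl
  set dv : ℝ → Fin 4 → ℝ := fun t =>
    ![30 * y t 1 - 30 * y t 0,
      3 * (M : ℝ) * y t 0 * r - 3 * (M : ℝ) * y t 0 * y t 2 - 3 * y t 1 + 3 * y t 0,
      3 * (M : ℝ) * y t 0 * y t 1 - 8 * y t 2, 0] with hdvdef
  have hvd : ∀ t (i : Fin 4), HasDerivAt (fun s => v s i) (dv t i) t := by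
    intro t i
    fin_cases i
    · exact hy0 t
    · exact hy1 t
    · exact hy2 t
    · exact hasDerivAt_const t r
  set PR : MvPolynomial (Fin 4) ℝ :=
    C ((M : ℝ) ^ 2) * (X 3 - C rmin) * (C rmax - X 3)
        * (rename Fin.castSucc (∑ i, ∑ j, C (Qe i j) * ae i * ae j)
            + rename Fin.castSucc (∑ i, ∑ j, C (Qo i j) * ao i * ao j))
      + ((∑ i, ∑ j, C (Re i j) * be i * be j) + ∑ i, ∑ j, C (Ro i j) * bo i * bo j) with hPRdef
  have hmt : ∀ t,
      (30 * y t 1 - 30 * y t 0) * eval (v t) (pderiv 0 V)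
        + (3 * (M : ℝ) * y t 0 * r - 3 * (M : ℝ) * y t 0 * y t 2 - 3 * y t 1 + 3 * y t 0)
            * eval (v t) (pderiv 1 V)
        + (3 * (M : ℝ) * y t 0 * y t 1 - 8 * y t 2) * eval (v t) (pderiv 2 V)
        - (y t 1 - y t 0)^2 = eval (v t) PR := by
    intro t
    have h : eval (v t) ((30 * X 1 - 30 * X 0) * pderiv 0 V
        + (C (3 * (M : ℝ)) * X 0 * X 3 - C (3 * (M : ℝ)) * X 0 * X 2 - 3 * X 1 + 3 * X 0)
            * pderiv 1 V
        + (C (3 * (M : ℝ)) * X 0 * X 1 - 8 * X 2) * pderiv 2 V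
        - (X 1 - X 0) ^ 2) = eval (v t) PR := by
      rw [hPRdef]; exact congrArg _ hmain
    simp only [map_sub, map_add, map_mul, map_pow, map_ofNat, eval_X, eval_C] at h
    rw [hv0, hv1, hv2, hv3] at h
    convert h using 2 <;> ring
  have hSnn : ∀ t, 0 ≤ eval (v t) PR := by
    intro t
    rw [hPRdef, map_add, map_mul]
    apply add_nonneg
    · apply mul_nonneg
      · rw [map_mul, map_mul, map_sub, map_sub, eval_C, eval_C, eval_C, eval_X, hv3]
        apply mul_nonneg (mul_nonneg (sq_nonneg _) (by linarith)) (by linarith)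
      · rw [map_add, eval_rename, eval_rename]
        exact add_nonneg (sos_eval_nonneg Qe hQe ae _) (sos_eval_nonneg Qo hQo ao _)
    · rw [map_add]
      exact add_nonneg (sos_eval_nonneg Re hRe be _) (sos_eval_nonneg Ro hRo bo _)
  set W : ℝ → ℝ := fun t => eval (v t) V with hWdef
  have hWd : ∀ t, HasDerivAt W ((y t 1 - y t 0)^2 + eval (v t) PR) t := by
    intro t
    have h := hasDerivAt_mvpoly_eval (fun i s => v s i) (dv t) t (hvd t) V
    have heq : (∑ i, dv t i * eval (fun i => v t i) (pderiv i V))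
        = (y t 1 - y t 0)^2 + eval (v t) PR := by
      rw [Fin.sum_univ_four]
      have e0 : dv t 0 = 30 * y t 1 - 30 * y t 0 := rfl
      have e1 : dv t 1 = 3 * (M : ℝ) * y t 0 * r - 3 * (M : ℝ) * y t 0 * y t 2
          - 3 * y t 1 + 3 * y t 0 := rfl
      have e2 : dv t 2 = 3 * (M : ℝ) * y t 0 * y t 1 - 8 * y t 2 := rfl
      have e3 : dv t 3 = 0 := rfl
      rw [e0, e1, e2, e3]
      have := hmt t
      show _ * eval (v t) _ + _ * eval (v t) _ + _ * eval (v t) _ + 0 * eval (v t) _ = _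
      linarith [hmt t]
    rw [heq] at h
    exact h
  -- bound on W for t ≥ 0
  have hΨc : Continuous fun pr : ℝ × ℝ × ℝ => eval ![pr.1, pr.2.1, pr.2.2, r] V := by
    have := continuous_mvpoly_eval (E := ℝ × ℝ × ℝ)
      (fun i pr => ![pr.1, pr.2.1, pr.2.2, r] i) (fun i => by
        fin_cases i
        · exact continuous_fst
        · exact continuous_fst.comp continuous_snd
        · exact continuous_snd.comp continuous_snd
        · exact continuous_const) V
    exact this
  obtain ⟨BV, hBV⟩ := bound_on_box hΨc R
  have hWb : ∀ t, 0 ≤ t → W t ≤ BV := by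
    intro t ht
    obtain ⟨h0, h1, h2⟩ := hR t ht
    have hb := hBV _ _ _ h0 h1 h2
    have hWt : W t = eval ![y t 0, y t 1, y t 2, r] V := rfl
    rw [hWt]
    exact le_trans (le_abs_self _) hb
  have hcontP : ∀ P : MvPolynomial (Fin 4) ℝ, Continuous fun t => eval (v t) P := by
    intro P
    have := continuous_mvpoly_eval (E := ℝ) (fun i t => v t i) (fun i => by
      fin_cases i
      · exact hc0
      · exact hc1
      · exact hc2
      · exact continuous_const) P
    exact this
  have hSc : Continuous fun t => eval (v t) PR := hcontP PR
  have hec : Continuous fun t => y t 1 - y t 0 := hc1.sub hc0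
  -- STEP C: integral bound for e²
  have hint : ∀ T, 0 ≤ T → (∫ t in (0:ℝ)..T, (y t 1 - y t 0)^2) ≤ BV - W 0 := by
    intro T hT
    have hFTC : (∫ t in (0:ℝ)..T, ((y t 1 - y t 0)^2 + eval (v t) PR)) = W T - W 0 :=
      intervalIntegral.integral_eq_sub_of_hasDerivAt (fun s _ => hWd s)
        (((hec.pow 2).add hSc).intervalIntegrable _ _)
    have hmono : (∫ t in (0:ℝ)..T, (y t 1 - y t 0)^2)
        ≤ ∫ t in (0:ℝ)..T, ((y t 1 - y t 0)^2 + eval (v t) PR) := by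
      apply intervalIntegral.integral_mono_on hT ((hec.pow 2).intervalIntegrable _ _)
        (((hec.pow 2).add hSc).intervalIntegrable _ _)
      intro s _
      simp only [Pi.add_apply, Pi.pow_apply]
      linarith [hSnn s]
    have := hWb T hT
    linarith
  -- STEP D: e → 0 via Barbalat
  obtain ⟨Lg, hLg⟩ := bound_on_box (Φ := fun pr : ℝ × ℝ × ℝ =>
    2 * (pr.2.1 - pr.1) * ((3 * (M : ℝ) * pr.1 * r - 3 * (M : ℝ) * pr.1 * pr.2.2
      - 3 * pr.2.1 + 3 * pr.1) - (30 * pr.2.1 - 30 * pr.1))) (by fun_prop) R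
  have hg : ∀ t, HasDerivAt (fun t => (y t 1 - y t 0)^2)
      (2 * (y t 1 - y t 0) * ((3 * (M : ℝ) * y t 0 * r - 3 * (M : ℝ) * y t 0 * y t 2
        - 3 * y t 1 + 3 * y t 0) - (30 * y t 1 - 30 * y t 0))) t := by
    intro t
    have := ((hy1 t).fun_sub (hy0 t)).fun_pow 2
    refine this.congr_deriv ?_
    ring
  have hgb : ∀ t, 0 ≤ t →
      |2 * (y t 1 - y t 0) * ((3 * (M : ℝ) * y t 0 * r - 3 * (M : ℝ) * y t 0 * y t 2
        - 3 * y t 1 + 3 * y t 0) - (30 * y t 1 - 30 * y t 0))| ≤ Lg := fun t ht => by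
    obtain ⟨h0, h1, h2⟩ := hR t ht
    exact hLg _ _ _ h0 h1 h2
  have hg0 : Tendsto (fun t => (y t 1 - y t 0)^2) atTop (𝓝 0) :=
    barbalat hg (fun t => sq_nonneg _) hgb hint
  have he0 : Tendsto (fun t => y t 1 - y t 0) atTop (𝓝 0) := by
    apply squeeze_zero_norm (a := fun t => Real.sqrt ((y t 1 - y t 0)^2))
    · intro t
      rw [Real.norm_eq_abs, ← Real.sqrt_sq_eq_abs]
    · have hsq : Tendsto Real.sqrt (𝓝 0) (𝓝 0) := by
        simpa using (Real.continuous_sqrt.tendsto 0)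
      exact hsq.comp hg0
  -- STEP E: x₃ - (3M/8)x₁² → 0
  set p3 : ℝ → ℝ := fun t => y t 2 - 3 * (M:ℝ) / 8 * (y t 0)^2 with hp3def
  have hp3d : ∀ t, HasDerivAt p3
      (-8 * p3 t + (-(39/2) * (M:ℝ) * y t 0 * (y t 1 - y t 0))) t := by
    intro t
    have := (hy2 t).fun_sub (((hy0 t).fun_pow 2).const_mul (3 * (M:ℝ) / 8))
    refine this.congr_deriv ?_
    simp only [hp3def]
    push_cast
    ring
  have habs39 : Tendsto (fun t => -(39/2) * (M:ℝ) * y t 0 * (y t 1 - y t 0)) atTop (𝓝 0) := by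
    apply squeeze_zero_norm' (a := fun t => (39/2 * (M:ℝ) * R) * |y t 1 - y t 0|)
    · filter_upwards [eventually_ge_atTop (0:ℝ)] with t ht
      obtain ⟨h0, _, _⟩ := hR t ht
      rw [Real.norm_eq_abs, abs_mul]
      apply mul_le_mul _ le_rfl (abs_nonneg _) (mul_nonneg (by nlinarith) hR0)
      rw [abs_mul]
      have habsc : |(-(39/2:ℝ)) * (M:ℝ)| = 39/2 * (M:ℝ) := by
        rw [abs_mul, abs_neg, abs_of_nonneg (by norm_num : (0:ℝ) ≤ 39/2),
          abs_of_nonneg (by linarith)]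
      rw [habsc]
      exact mul_le_mul_of_nonneg_left h0 (by nlinarith)
    · have := he0.abs.const_mul (39/2 * (M:ℝ) * R)
      simpa using this
  have hp30 : Tendsto p3 atTop (𝓝 0) :=
    tendsto_zero_of_decay (by norm_num : (0:ℝ) < 8) hp3d habs39
  -- STEP F: drift argument, M x₁ (r - x₃) → 0
  set q3 : ℝ → ℝ := fun t => 3 * (M:ℝ) * y t 0 * (r - y t 2) with hq3def
  have hq3d : ∀ t, HasDerivAt q3
      (3 * (M:ℝ) * (30 * y t 1 - 30 * y t 0) * (r - y t 2)
        + 3 * (M:ℝ) * y t 0 * (0 - (3 * (M : ℝ) * y t 0 * y t 1 - 8 * y t 2))) t := by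
    intro t
    have := ((hy0 t).const_mul (3 * (M:ℝ))).fun_mul ((hasDerivAt_const t r).fun_sub (hy2 t))
    convert this using 1
  obtain ⟨Lq, hLq⟩ := bound_on_box (Φ := fun pr : ℝ × ℝ × ℝ =>
    3 * (M:ℝ) * (30 * pr.2.1 - 30 * pr.1) * (r - pr.2.2)
      + 3 * (M:ℝ) * pr.1 * (0 - (3 * (M : ℝ) * pr.1 * pr.2.1 - 8 * pr.2.2))) (by fun_prop) R
  have hd10 : Tendsto (fun t => 30 * y t 1 - 30 * y t 0) atTop (𝓝 0) := by
    have := he0.const_mul (30:ℝ)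
    rw [mul_zero] at this
    exact this.congr (fun t => by ring)
  have hq30 : Tendsto q3 atTop (𝓝 0) := by
    apply drift_tendsto_zero (L := Lq)
      (w := fun t => y t 1) (z := fun t => y t 0)
      (z' := fun t => 30 * y t 1 - 30 * y t 0)
      (e := fun t => -(3 * (y t 1 - y t 0)))
      hq3d
    · intro t ht
      obtain ⟨h0, h1, h2⟩ := hR t ht
      exact hLq _ _ _ h0 h1 h2
    · intro t
      convert hy1 t using 1
      simp only [hq3def]
      ring
    · exact hy0
    · exact (hec.const_mul 3).neg
    · exact (continuous_const.mul hc1).sub (continuous_const.mul hc0)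
    · exact he0
    · exact hd10
    · have := (he0.const_mul (3:ℝ)).neg
      simpa using this
  -- STEP G: the three components of the vector field tend to 0 along the trajectory
  have hf2 : Tendsto (fun t => 3 * (M : ℝ) * y t 0 * r - 3 * (M : ℝ) * y t 0 * y t 2
      - 3 * y t 1 + 3 * y t 0) atTop (𝓝 0) := by
    have := hq30.sub (he0.const_mul (3:ℝ))
    rw [mul_zero, sub_zero] at this
    exact this.congr (fun t => by simp only [hq3def]; ring)
  have ht1 : Tendsto (fun t => 3 * (M:ℝ) * y t 0 * (y t 1 - y t 0)) atTop (𝓝 0) := by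
    apply squeeze_zero_norm' (a := fun t => (3 * (M:ℝ) * R) * |y t 1 - y t 0|)
    · filter_upwards [eventually_ge_atTop (0:ℝ)] with t ht
      obtain ⟨h0, _, _⟩ := hR t ht
      rw [Real.norm_eq_abs, abs_mul]
      apply mul_le_mul _ le_rfl (abs_nonneg _) (mul_nonneg (by nlinarith) hR0)
      rw [abs_mul]
      have habsc : |(3:ℝ) * (M:ℝ)| = 3 * (M:ℝ) := by
        rw [abs_mul, abs_of_nonneg (by norm_num : (0:ℝ) ≤ 3), abs_of_nonneg (by linarith)]
      rw [habsc]
      exact mul_le_mul_of_nonneg_left h0 (by nlinarith)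
    · have := he0.abs.const_mul (3 * (M:ℝ) * R)
      simpa using this
  have hf3 : Tendsto (fun t => 3 * (M : ℝ) * y t 0 * y t 1 - 8 * y t 2) atTop (𝓝 0) := by
    have := ht1.sub (hp30.const_mul (8:ℝ))
    rw [mul_zero, sub_zero] at this
    exact this.congr (fun t => by simp only [hp3def]; ring)
  -- FINAL STEP: convergence to the stationary set
  set SS := {z : EuclideanSpace ℝ (Fin 3) |
      30 * z 1 - 30 * z 0 = 0 ∧
      3 * (M : ℝ) * z 0 * r - 3 * (M : ℝ) * z 0 * z 2 - 3 * z 1 + 3 * z 0 = 0 ∧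
      3 * (M : ℝ) * z 0 * z 1 - 8 * z 2 = 0} with hSSdef
  rw [Metric.tendsto_atTop]
  intro ε hε
  set K3 := Metric.closedBall (0 : EuclideanSpace ℝ (Fin 3)) (Real.sqrt 3 * R) with hK3
  have hyK : ∀ t, 0 ≤ t → y t ∈ K3 := by
    intro t ht
    obtain ⟨h0, h1, h2⟩ := hR t ht
    rw [hK3, Metric.mem_closedBall, dist_zero_right, EuclideanSpace.norm_eq]
    have hsum : (∑ i, ‖y t i‖^2) ≤ 3 * R^2 := by
      rw [Fin.sum_univ_three]
      simp only [Real.norm_eq_abs]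
      nlinarith [abs_nonneg (y t 0), abs_nonneg (y t 1), abs_nonneg (y t 2)]
    calc Real.sqrt (∑ i, ‖y t i‖^2) ≤ Real.sqrt (3 * R^2) := Real.sqrt_le_sqrt hsum
      _ = Real.sqrt 3 * R := by
          rw [Real.sqrt_mul (by norm_num : (0:ℝ) ≤ 3), Real.sqrt_sq hR0]
  have hproj : ∀ i : Fin 3, Continuous fun z : EuclideanSpace ℝ (Fin 3) => z i := by
    intro i
    exact (EuclideanSpace.proj (𝕜 := ℝ) i).continuous
  set Φ : EuclideanSpace ℝ (Fin 3) → ℝ := fun z =>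
    |30 * z 1 - 30 * z 0|
      + |3 * (M : ℝ) * z 0 * r - 3 * (M : ℝ) * z 0 * z 2 - 3 * z 1 + 3 * z 0|
      + |3 * (M : ℝ) * z 0 * z 1 - 8 * z 2| with hΦdef
  have hΦc : Continuous Φ := by
    have h0 := hproj 0
    have h1 := hproj 1
    have h2 := hproj 2
    apply Continuous.add
    apply Continuous.add
    · exact ((continuous_const.mul h1).sub (continuous_const.mul h0)).abs
    · exact ((((((continuous_const.mul h0)).mul continuous_const).sub
        ((continuous_const.mul h0).mul h2)).sub (continuous_const.mul h1)).add
        (continuous_const.mul h0)).abs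
    · exact (((continuous_const.mul h0).mul h1).sub (continuous_const.mul h2)).abs
  have hΦy : Tendsto (fun t => Φ (y t)) atTop (𝓝 0) := by
    have := (hd10.abs.add hf2.abs).add hf3.abs
    simpa [hΦdef] using this
  have hKc : IsCompact K3 := isCompact_closedBall _ _
  have hclosed : IsClosed {z : EuclideanSpace ℝ (Fin 3) | ε ≤ Metric.infDist z SS} :=
    isClosed_le continuous_const (Metric.continuous_infDist_pt SS)
  set Kε := K3 ∩ {z : EuclideanSpace ℝ (Fin 3) | ε ≤ Metric.infDist z SS} with hKεdef
  have hKεc : IsCompact Kε := hKc.inter_right hclosed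
  rcases Kε.eq_empty_or_nonempty with hemp | hne
  · refine ⟨0, fun t ht => ?_⟩
    have hyKt := hyK t ht
    have hnot : ¬ (ε ≤ Metric.infDist (y t) SS) := by
      intro hcon2
      have hmem : y t ∈ Kε := ⟨hyKt, hcon2⟩
      rw [hemp] at hmem
      exact hmem
    rw [Real.dist_eq, sub_zero, abs_of_nonneg Metric.infDist_nonneg]
    linarith [not_le.mp hnot]
  · obtain ⟨z₀, hz₀mem, hz₀min⟩ := hKεc.exists_isMinOn hne hΦc.continuousOn
    have hm : 0 < Φ z₀ := by
      rcases lt_or_ge 0 (Φ z₀) with h | h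
      · exact h
      · exfalso
        have ha := abs_nonneg (30 * z₀ 1 - 30 * z₀ 0)
        have hb := abs_nonneg (3 * (M : ℝ) * z₀ 0 * r - 3 * (M : ℝ) * z₀ 0 * z₀ 2
          - 3 * z₀ 1 + 3 * z₀ 0)
        have hcc := abs_nonneg (3 * (M : ℝ) * z₀ 0 * z₀ 1 - 8 * z₀ 2)
        have hΦz : Φ z₀ = |30 * z₀ 1 - 30 * z₀ 0|
            + |3 * (M : ℝ) * z₀ 0 * r - 3 * (M : ℝ) * z₀ 0 * z₀ 2 - 3 * z₀ 1 + 3 * z₀ 0|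
            + |3 * (M : ℝ) * z₀ 0 * z₀ 1 - 8 * z₀ 2| := rfl
        rw [hΦz] at h
        have hz₀S : z₀ ∈ SS := by
          rw [hSSdef]
          refine ⟨abs_eq_zero.mp (by linarith), abs_eq_zero.mp (by linarith),
            abs_eq_zero.mp (by linarith)⟩
        have hid : Metric.infDist z₀ SS = 0 := Metric.infDist_zero_of_mem hz₀S
        have hεd := hz₀mem.2
        rw [Set.mem_setOf_eq, hid] at hεd
        linarith
    obtain ⟨N, hN⟩ := Metric.tendsto_atTop.mp hΦy (Φ z₀) hm
    refine ⟨max N 0, fun t ht => ?_⟩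
    have htN : N ≤ t := le_trans (le_max_left _ _) ht
    have ht0 : 0 ≤ t := le_trans (le_max_right _ _) ht
    have hΦt : Φ (y t) < Φ z₀ := by
      have hd := hN t htN
      rw [Real.dist_eq, sub_zero] at hd
      calc Φ (y t) ≤ |Φ (y t)| := le_abs_self _
        _ < Φ z₀ := hd
    have hnotin : y t ∉ Kε := by
      intro hmem
      exact absurd (isMinOn_iff.mp hz₀min _ hmem) (not_le.mpr hΦt)
    have hnot : ¬ ε ≤ Metric.infDist (y t) SS := fun hcon3 => hnotin ⟨hyK t ht0, hcon3⟩
    rw [Real.dist_eq, sub_zero, abs_of_nonneg Metric.infDist_nonneg]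
    linarith [not_le.mp hnot]
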